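/- Let A be an N × N complex matrix with spectral norm ‖A‖ ≤ 1. Then there exists a 2N × 2N complex unitary matrix U whose leading principal N × N block equals A; that is, every N × N complex matrix A with ‖A‖ ≤ 1 admits a unitary dilation of size 2N, so every nonzero complex matrix A can be embedded in a (‖A‖, 1, 0)-block-encoding. -/

import Mathlib

open scoped Kronecker
open Matrix

noncomputable def specNorm {n : Type*} [Fintype n] [DecidableEq n] (A : Matrix n n ℂ) : ℝ :=
  ‖Matrix.toEuclideanCLM (𝕜 := ℂ) A‖

def IsPermMatrix {n : Type*} [Fintype n] [DecidableEq n] (S : Matrix n n ℂ) : Prop :=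
  ∃ e : Equiv.Perm n, S = e.permMatrix ℂ

noncomputable def kron {N M : ℕ} (A : Matrix (Fin N) (Fin N) ℂ) (B : Matrix (Fin M) (Fin M) ℂ) :
    Matrix (Fin (N * M)) (Fin (N * M)) ℂ :=
  Matrix.reindex finProdFinEquiv finProdFinEquiv (A ⊗ₖ B)

def castSq {N M : ℕ} (h : N = M) (A : Matrix (Fin N) (Fin N) ℂ) : Matrix (Fin M) (Fin M) ℂ :=
  Matrix.reindex (finCongr h) (finCongr h) A

def leadBlock {N M : ℕ} (h : M ≤ N) (U : Matrix (Fin N) (Fin N) ℂ) :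
    Matrix (Fin M) (Fin M) ℂ :=
  Matrix.of fun i j => U (Fin.castLE h i) (Fin.castLE h j)

theorem twoPowLe (a s : ℕ) : 2 ^ s ≤ 2 ^ (a + s) :=
  Nat.pow_le_pow_right (by norm_num) (Nat.le_add_left s a)

def IsBlockEncoding (a s : ℕ) (α ε : ℝ)
    (U : Matrix (Fin (2 ^ (a + s))) (Fin (2 ^ (a + s))) ℂ)
    (A : Matrix (Fin (2 ^ s)) (Fin (2 ^ s)) ℂ) : Prop :=
  U ∈ Matrix.unitaryGroup (Fin (2 ^ (a + s))) ℂ ∧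
    specNorm (A - (α : ℂ) • leadBlock (twoPowLe a s) U) ≤ ε

section Aux

open Polynomial
open scoped ComplexOrder

variable {n : Type*} [Fintype n] [DecidableEq n]

/-- Conjugation by a unitary matrix as an algebra homomorphism. -/
noncomputable def conjAlgHom (u : Matrix n n ℂ) (h1 : star u * u = 1) (h2 : u * star u = 1) :
    Matrix n n ℂ →ₐ[ℂ] Matrix n n ℂ where
  toFun M := u * M * star u
  map_one' := by show u * 1 * star u = 1; rw [mul_one, h2]
  map_mul' M N := by
    show u * (M * N) * star u = (u * M * star u) * (u * N * star u)
    have : u * M * star u * (u * N * star u) = u * (M * ((star u * u) * N)) * star u := by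
      simp only [mul_assoc]
    rw [this, h1, one_mul]
  map_zero' := by simp
  map_add' M N := by
    show u * (M + N) * star u = u * M * star u + u * N * star u
    rw [mul_add, add_mul]
  commutes' r := by
    simp [Algebra.algebraMap_eq_smul_one, Matrix.mul_smul, Matrix.smul_mul, h2]

lemma aeval_diagonal (d : n → ℂ) (p : ℂ[X]) :
    aeval (Matrix.diagonal d) p = Matrix.diagonal fun i => p.eval (d i) := by
  have h := aeval_algHom_apply (Matrix.diagonalAlgHom (n := n) ℂ) d p
  simp only [Matrix.diagonalAlgHom_apply] at h
  have h2 : aeval d p = fun i => p.eval (d i) := by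
    funext i
    have h3 := aeval_algHom_apply (Pi.evalAlgHom ℂ (fun _ : n => ℂ) i) d p
    have h4 : aeval (d i) p = p.eval (d i) := by
      rw [Polynomial.aeval_def, Polynomial.eval, Algebra.algebraMap_self]
    exact h3.symm.trans h4
  rw [h, h2]

lemma commute_aeval {X M : Matrix n n ℂ} (h : Commute X M) (p : ℂ[X]) :
    Commute X (aeval M p) := by
  induction p using Polynomial.induction_on with
  | C a => rw [aeval_C]; exact (Algebra.commutes a X).symm
  | add p q hp hq => rw [map_add]; exact hp.add_right hq
  | monomial k a ih =>
      rw [pow_succ, ← mul_assoc, _root_.map_mul, aeval_X]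
      exact ih.mul_right h

/-- The square root of a positive semidefinite matrix (spectral definition). -/
noncomputable def Matrix.PosSemidef.sqrt {P : Matrix n n ℂ} (hP : P.PosSemidef) : Matrix n n ℂ :=
  (hP.1.eigenvectorUnitary : Matrix n n ℂ) * diagonal (RCLike.ofReal ∘ Real.sqrt ∘ hP.1.eigenvalues) *
    star (hP.1.eigenvectorUnitary : Matrix n n ℂ)

open scoped MatrixOrder in
lemma Matrix.PosSemidef.sqrt_eq_cfcSqrt {P : Matrix n n ℂ} (hP : P.PosSemidef) :
    hP.sqrt = CFC.sqrt P := by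
  rw [CFC.sqrt_eq_real_sqrt P hP.nonneg, cfcₙ_eq_cfc, hP.1.cfc_eq Real.sqrt]
  simp [Matrix.PosSemidef.sqrt, Matrix.IsHermitian.cfc]

open scoped MatrixOrder in
lemma Matrix.PosSemidef.posSemidef_sqrt {P : Matrix n n ℂ} (hP : P.PosSemidef) :
    hP.sqrt.PosSemidef := by
  rw [hP.sqrt_eq_cfcSqrt]
  exact Matrix.nonneg_iff_posSemidef.mp (CFC.sqrt_nonneg P)

open scoped MatrixOrder in
lemma Matrix.PosSemidef.sqrt_mul_self {P : Matrix n n ℂ} (hP : P.PosSemidef) :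
    hP.sqrt * hP.sqrt = P := by
  rw [hP.sqrt_eq_cfcSqrt]
  exact CFC.sqrt_mul_sqrt_self P hP.nonneg

open scoped MatrixOrder in
lemma Matrix.PosSemidef.eq_sqrt_of_sq_eq {A B : Matrix n n ℂ} (hA : A.PosSemidef)
    (hB : B.PosSemidef) (h : A ^ 2 = B) : A = hB.sqrt := by
  rw [hB.sqrt_eq_cfcSqrt]
  exact (CFC.sqrt_unique (by rw [← pow_two]; exact h) hA.nonneg).symm

lemma exists_poly_sqrt {P : Matrix n n ℂ} (hP : P.PosSemidef) :
    ∃ p : ℂ[X], hP.sqrt = aeval P p := by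
  classical
  set μ : n → ℝ := hP.1.eigenvalues with hμ
  set u : Matrix n n ℂ := (hP.1.eigenvectorUnitary : Matrix n n ℂ) with hu
  have hmem : (u : Matrix n n ℂ) ∈ Matrix.unitaryGroup n ℂ := hP.1.eigenvectorUnitary.2
  have h1 : star u * u = 1 := Matrix.mem_unitaryGroup_iff'.mp hmem
  have h2 : u * star u = 1 := Matrix.mem_unitaryGroup_iff.mp hmem
  set s : Finset ℂ := Finset.image (fun i => (μ i : ℂ)) Finset.univ with hs
  refine ⟨Lagrange.interpolate s id (fun z => ((Real.sqrt z.re : ℝ) : ℂ)), ?_⟩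
  have hPeq : P = conjAlgHom u h1 h2 (Matrix.diagonal fun i => (μ i : ℂ)) := by
    simpa [conjAlgHom, Function.comp_def] using hP.1.spectral_theorem
  conv_rhs => rw [hPeq, aeval_algHom_apply, aeval_diagonal]
  show hP.sqrt = u * (Matrix.diagonal _) * star u
  unfold Matrix.PosSemidef.sqrt
  have hfun : (fun i => Polynomial.eval ((μ i : ℝ) : ℂ)
        (Lagrange.interpolate s id fun z : ℂ => ((Real.sqrt z.re : ℝ) : ℂ)))
      = (RCLike.ofReal ∘ Real.sqrt ∘ hP.1.eigenvalues : n → ℂ) := by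
    funext i
    have hmem2 : ((μ i : ℝ) : ℂ) ∈ s := Finset.mem_image.mpr ⟨i, Finset.mem_univ i, rfl⟩
    have hnode := Lagrange.eval_interpolate_at_node (v := id) (s := s)
        (fun z : ℂ => ((Real.sqrt z.re : ℝ) : ℂ)) (Set.injOn_id _) hmem2
    simp only [id_eq] at hnode
    rw [hnode]
    simp [Function.comp, hμ]
  rw [hfun]

lemma commute_sqrt {P X : Matrix n n ℂ} (hP : P.PosSemidef) (h : Commute X P) :
    Commute X hP.sqrt := by
  obtain ⟨p, hp⟩ := exists_poly_sqrt hP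
  rw [hp]
  exact commute_aeval h p

lemma posSemidef_fromBlocks_diag {m l : Type*} [Fintype m] [Fintype l]
    {P : Matrix m m ℂ} {Q : Matrix l l ℂ} (hP : P.PosSemidef) (hQ : Q.PosSemidef) :
    (Matrix.fromBlocks P 0 0 Q).PosSemidef := by
  refine Matrix.PosSemidef.of_dotProduct_mulVec_nonneg ?_ ?_
  · show (Matrix.fromBlocks P 0 0 Q)ᴴ = _
    rw [Matrix.fromBlocks_conjTranspose]
    simp [hP.1.eq, hQ.1.eq]
  · intro x
    have hstar : star x = Sum.elim (star (x ∘ Sum.inl)) (star (x ∘ Sum.inr)) :=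
      funext fun i => by cases i <;> rfl
    have hmv : (Matrix.fromBlocks P 0 0 Q) *ᵥ x =
        Sum.elim (P *ᵥ (x ∘ Sum.inl)) (Q *ᵥ (x ∘ Sum.inr)) := by
      rw [Matrix.fromBlocks_mulVec]
      simp
    rw [hstar, hmv, sumElim_dotProduct_sumElim]
    exact add_nonneg (hP.dotProduct_mulVec_nonneg _) (hQ.dotProduct_mulVec_nonneg _)

open scoped Matrix.Norms.L2Operator in
lemma specNorm_eq_l2 (A : Matrix n n ℂ) : specNorm A = ‖A‖ := rfl

open scoped Matrix.Norms.L2Operator in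
lemma one_sub_psd (A : Matrix n n ℂ) (hA : specNorm A ≤ 1) :
    (1 - Aᴴ * A).PosSemidef := by
  refine Matrix.PosSemidef.of_dotProduct_mulVec_nonneg ?_ ?_
  · show (1 - Aᴴ * A)ᴴ = _
    simp [Matrix.conjTranspose_sub, Matrix.conjTranspose_mul]
  · intro x
    have key : ∀ v : n → ℂ, star v ⬝ᵥ v =
        ((‖(WithLp.equiv 2 (n → ℂ)).symm v‖ : ℝ) : ℂ) ^ 2 := by
      intro v
      have h := inner_self_eq_norm_sq_to_K (𝕜 := ℂ) ((WithLp.equiv 2 (n → ℂ)).symm v)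
      rw [EuclideanSpace.inner_eq_star_dotProduct, dotProduct_comm] at h
      simpa using h
    have e1 : star x ⬝ᵥ (1 - Aᴴ * A) *ᵥ x =
        star x ⬝ᵥ x - star (A *ᵥ x) ⬝ᵥ (A *ᵥ x) := by
      rw [Matrix.sub_mulVec, dotProduct_sub, Matrix.one_mulVec, ← Matrix.mulVec_mulVec,
        Matrix.dotProduct_mulVec, ← Matrix.star_mulVec]
    rw [e1, key x, key (A *ᵥ x), ← Complex.ofReal_pow, ← Complex.ofReal_pow,
      ← Complex.ofReal_sub, Complex.zero_le_real, sub_nonneg]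
    have hAx : ‖(WithLp.equiv 2 (n → ℂ)).symm (A *ᵥ x)‖ ≤
        ‖(WithLp.equiv 2 (n → ℂ)).symm x‖ := by
      have h := Matrix.l2_opNorm_mulVec A ((WithLp.equiv 2 (n → ℂ)).symm x)
      have hA' : ‖A‖ ≤ 1 := hA
      calc ‖(WithLp.equiv 2 (n → ℂ)).symm (A *ᵥ x)‖
          ≤ ‖A‖ * ‖(WithLp.equiv 2 (n → ℂ)).symm x‖ := h
        _ ≤ 1 * ‖(WithLp.equiv 2 (n → ℂ)).symm x‖ := by
            exact mul_le_mul_of_nonneg_right hA' (norm_nonneg _)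
        _ = _ := one_mul _
    exact pow_le_pow_left₀ (norm_nonneg _) hAx 2

end Aux

open scoped ComplexOrder

/-- unitary dilation. Every `N × N` complex matrix `A` with spectral norm
`‖A‖ ≤ 1` is the leading principal `N × N` block of some `2N × 2N` unitary matrix. -/
theorem unitary_dilation (N : ℕ) (A : Matrix (Fin N) (Fin N) ℂ) (hA : specNorm A ≤ 1) :
    ∃ U : Matrix (Fin (2 * N)) (Fin (2 * N)) ℂ,
      U ∈ Matrix.unitaryGroup (Fin (2 * N)) ℂ ∧
      leadBlock (by omega) U = A := by
  have hAH : specNorm Aᴴ ≤ 1 := by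
    rw [specNorm_eq_l2] at hA ⊢
    rwa [Matrix.l2_opNorm_conjTranspose]
  have hB : (1 - Aᴴ * A).PosSemidef := one_sub_psd A hA
  have hC : (1 - A * Aᴴ).PosSemidef := by
    have := one_sub_psd Aᴴ hAH
    simpa using this
  set sB := hB.sqrt with hsB
  set sC := hC.sqrt with hsC
  have hsBh : sBᴴ = sB := hB.posSemidef_sqrt.1
  have hsCh : sCᴴ = sC := hC.posSemidef_sqrt.1
  have hsB2 : sB * sB = 1 - Aᴴ * A := hB.sqrt_mul_self
  have hsC2 : sC * sC = 1 - A * Aᴴ := hC.sqrt_mul_self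
  set V : Matrix (Fin N ⊕ Fin N) (Fin N ⊕ Fin N) ℂ := Matrix.fromBlocks 0 A Aᴴ 0 with hV
  set S : Matrix (Fin N ⊕ Fin N) (Fin N ⊕ Fin N) ℂ := Matrix.fromBlocks sC 0 0 sB with hS
  set W : Matrix (Fin N ⊕ Fin N) (Fin N ⊕ Fin N) ℂ :=
    Matrix.fromBlocks (1 - A * Aᴴ) 0 0 (1 - Aᴴ * A) with hW
  have hS_psd : S.PosSemidef := posSemidef_fromBlocks_diag hC.posSemidef_sqrt hB.posSemidef_sqrt
  have hSW : S ^ 2 = W := by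
    rw [pow_two, hS, Matrix.fromBlocks_multiply]
    simp [hsB2, hsC2, hW]
  have hW_psd : W.PosSemidef := hSW ▸ hS_psd.pow 2
  have hVW : Commute V W := by
    show V * W = W * V
    rw [hV, hW, Matrix.fromBlocks_multiply, Matrix.fromBlocks_multiply]
    simp only [Matrix.zero_mul, Matrix.mul_zero, add_zero, zero_add]
    have c1 : A * (1 - Aᴴ * A) = (1 - A * Aᴴ) * A := by noncomm_ring
    have c2 : Aᴴ * (1 - A * Aᴴ) = (1 - Aᴴ * A) * Aᴴ := by noncomm_ring
    rw [c1, c2]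
  have hS_eq : S = hW_psd.sqrt := hS_psd.eq_sqrt_of_sq_eq hW_psd hSW
  have hVS : Commute V S := by
    rw [hS_eq]
    exact commute_sqrt hW_psd hVW
  have hkey : A * sB = sC * A := by
    have h : V * S = S * V := hVS
    rw [hV, hS, Matrix.fromBlocks_multiply, Matrix.fromBlocks_multiply] at h
    simp only [Matrix.zero_mul, Matrix.mul_zero, add_zero, zero_add] at h
    ext i j
    have h2 := congrFun (congrFun h (Sum.inl i)) (Sum.inr j)
    simpa using h2
  have hkeyT : sB * Aᴴ = Aᴴ * sC := by
    have h := congrArg Matrix.conjTranspose hkey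
    simpa [Matrix.conjTranspose_mul, hsBh, hsCh] using h
  set U₀ : Matrix (Fin N ⊕ Fin N) (Fin N ⊕ Fin N) ℂ := Matrix.fromBlocks A sC sB (-Aᴴ) with hU₀def
  have hU₀H : U₀ᴴ = Matrix.fromBlocks Aᴴ sB sC (-A) := by
    rw [hU₀def, Matrix.fromBlocks_conjTranspose]
    simp [hsBh, hsCh]
  have hU₀ : U₀ * star U₀ = 1 := by
    rw [Matrix.star_eq_conjTranspose, hU₀H, hU₀def, Matrix.fromBlocks_multiply,
      ← Matrix.fromBlocks_one]
    have e11 : A * Aᴴ + sC * sC = 1 := by rw [hsC2]; abel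
    have e12 : A * sB + sC * -A = 0 := by
      rw [hkey, Matrix.mul_neg]; abel
    have e21 : sB * Aᴴ + -Aᴴ * sC = 0 := by
      rw [hkeyT, Matrix.neg_mul]; abel
    have e22 : sB * sB + -Aᴴ * -A = 1 := by
      rw [hsB2, neg_mul_neg]; abel
    rw [e11, e12, e21, e22]
  have h2N : N + N = 2 * N := by omega
  let e : Fin N ⊕ Fin N ≃ Fin (2 * N) := finSumFinEquiv.trans (finCongr h2N)
  refine ⟨Matrix.reindex e e U₀, ?_, ?_⟩
  · rw [Matrix.mem_unitaryGroup_iff]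
    have hstar : star (Matrix.reindex e e U₀) = Matrix.reindex e e (star U₀) := by
      simp [Matrix.reindex_apply, Matrix.star_eq_conjTranspose, Matrix.conjTranspose_submatrix]
    rw [hstar, Matrix.reindex_apply, Matrix.reindex_apply,
      Matrix.submatrix_mul_equiv U₀ (star U₀) _ e.symm _, hU₀,
      Matrix.submatrix_one_equiv]
  · have he : ∀ k : Fin N, e.symm (Fin.castLE (by omega : N ≤ 2 * N) k) = Sum.inl k := by
      intro k
      have h3 : (finCongr h2N).symm (Fin.castLE (by omega : N ≤ 2 * N) k) =
          Fin.castAdd N k := by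
        ext; simp
      simp only [e, Equiv.symm_trans_apply, h3]
      exact finSumFinEquiv_symm_apply_castAdd k
    ext i j
    simp only [leadBlock, Matrix.of_apply, Matrix.reindex_apply, Matrix.submatrix_apply, he]
    rw [hU₀def]
    rfl
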